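/- Let K be a field and n a positive integer. The matrices SupDiag_n and SubDiag_n generate M_n(K) as a K-algebra; that is, the smallest K-subalgebra of M_n(K) containing SupDiag_n and SubDiag_n is M_n(K) itself. -/

import Mathlib

open Matrix

noncomputable section

/-- The `n × n` matrix with `1`s on the superdiagonal and `0`s elsewhere. -/
def supDiag (K : Type*) [Semiring K] (n : ℕ) : Matrix (Fin n) (Fin n) K :=
  Matrix.of fun i j => if (i : ℕ) + 1 = (j : ℕ) then 1 else 0

/-- The `n × n` matrix with `1`s on the subdiagonal and `0`s elsewhere. -/
def subDiag (K : Type*) [Semiring K] (n : ℕ) : Matrix (Fin n) (Fin n) K :=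
  (supDiag K n).transpose

/-- Block index function for the `(ℓ, m)` block decomposition of `Fin (ℓ + m)`. -/
def blkIdx (ℓ m : ℕ) (i : Fin (ℓ + m)) : ℕ := if (i : ℕ) < ℓ then 0 else 1

/-- `E_{(ℓ,m)}(K)`: the `K`-subalgebra of `M_{ℓ+m}(K)` of block upper triangular
matrices `[[a, b], [0, c]]` with `a ∈ M_ℓ(K)`, `b ∈ M_{ℓ×m}(K)`, `c ∈ M_m(K)`. -/
def Eblk (K : Type*) [CommRing K] (ℓ m : ℕ) :
    Subalgebra K (Matrix (Fin (ℓ + m)) (Fin (ℓ + m)) K) where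
  carrier := { M | M.BlockTriangular (blkIdx ℓ m) }
  mul_mem' ha hb := ha.mul hb
  add_mem' ha hb := ha.add hb
  one_mem' := Matrix.blockTriangular_one
  algebraMap_mem' r := fun i j hij => by
    rw [Matrix.algebraMap_matrix_apply, if_neg]
    rintro rfl
    exact lt_irrefl _ hij

/-- `T_{(ℓ,m)}(K)`: the set of block matrices `[[0, b], [0, 0]]` with `b ∈ M_{ℓ×m}(K)`. -/
def Tblk (K : Type*) [Semiring K] (ℓ m : ℕ) : Set (Matrix (Fin (ℓ + m)) (Fin (ℓ + m)) K) :=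
  { M | ∀ i j : Fin (ℓ + m), ¬((i : ℕ) < ℓ ∧ ℓ ≤ (j : ℕ)) → M i j = 0 }

/-- `π_ℓ`: the upper-left `ℓ × ℓ` block of an `(ℓ+m) × (ℓ+m)` matrix. -/
def blkL (K : Type*) [Semiring K] (ℓ m : ℕ) (M : Matrix (Fin (ℓ + m)) (Fin (ℓ + m)) K) :
    Matrix (Fin ℓ) (Fin ℓ) K :=
  Matrix.of fun i j => M (Fin.castAdd m i) (Fin.castAdd m j)

/-- `π_m`: the lower-right `m × m` block of an `(ℓ+m) × (ℓ+m)` matrix. -/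
def blkR (K : Type*) [Semiring K] (ℓ m : ℕ) (M : Matrix (Fin (ℓ + m)) (Fin (ℓ + m)) K) :
    Matrix (Fin m) (Fin m) K :=
  Matrix.of fun i j => M (Fin.natAdd ℓ i) (Fin.natAdd ℓ j)

/-- The block matrix `I_ℓ = [[1, 0], [0, 0]]` inside `M_{ℓ+m}(K)`. -/
def idL (K : Type*) [Semiring K] (ℓ m : ℕ) : Matrix (Fin (ℓ + m)) (Fin (ℓ + m)) K :=
  Matrix.of fun i j => if i = j ∧ (i : ℕ) < ℓ then 1 else 0

lemma supDiag_pow (K : Type*) [Semiring K] (n k : ℕ) :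
    (supDiag K n) ^ k = Matrix.of fun i j : Fin n => if (i : ℕ) + k = (j : ℕ) then 1 else 0 := by
  induction k with
  | zero =>
    ext i j
    simp [Matrix.one_apply, Fin.ext_iff]
  | succ k ih =>
    ext i j
    rw [pow_succ, ih, Matrix.mul_apply]
    simp only [Matrix.of_apply, supDiag]
    by_cases h : (i : ℕ) + k < n
    · rw [Finset.sum_eq_single (⟨(i : ℕ) + k, h⟩ : Fin n)]
      · rw [if_pos rfl, one_mul]
        exact if_congr (by simp; omega) rfl rfl
      · intro b _ hb
        rw [if_neg, zero_mul]
        intro hc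
        exact hb (Fin.ext hc.symm)
      · simp
    · rw [Finset.sum_eq_zero, if_neg (by have := j.isLt; omega)]
      intro x _
      rw [if_neg (by have := x.isLt; omega), zero_mul]

lemma subDiag_pow (K : Type*) [Semiring K] (n k : ℕ) :
    (subDiag K n) ^ k = Matrix.of fun i j : Fin n => if (j : ℕ) + k = (i : ℕ) then 1 else 0 := by
  induction k with
  | zero =>
    ext i j
    simp [Matrix.one_apply, Fin.ext_iff, eq_comm]
  | succ k ih =>
    ext i j
    rw [pow_succ, ih, Matrix.mul_apply]
    simp only [Matrix.of_apply, subDiag, supDiag, Matrix.transpose_apply]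
    by_cases h : (j : ℕ) + 1 < n
    · rw [Finset.sum_eq_single (⟨(j : ℕ) + 1, h⟩ : Fin n)]
      · rw [if_pos rfl, mul_one]
        exact if_congr (by simp; omega) rfl rfl
      · intro b _ hb
        rw [show (if (j:ℕ)+1 = (b:ℕ) then (1:K) else 0) = 0 from
          if_neg fun hc => hb (Fin.ext hc.symm), mul_zero]
      · simp
    · rw [Finset.sum_eq_zero fun x _ => by
        rw [show (if (j:ℕ)+1 = (x:ℕ) then (1:K) else 0) = 0 from
          if_neg (by have := x.isLt; omega), mul_zero]]
      exact (if_neg (by have := i.isLt; omega)).symm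

lemma supDiag_pow_max (K : Type*) [Semiring K] (m : ℕ) :
    (supDiag K (m + 1)) ^ m = Matrix.single (0 : Fin (m + 1)) (Fin.last m) 1 := by
  rw [supDiag_pow]
  ext i j
  simp only [Matrix.of_apply, Matrix.single, Fin.ext_iff, Fin.val_last, Fin.val_zero]
  exact if_congr (by have := i.isLt; have := j.isLt; omega) rfl rfl

lemma subDiag_pow_max (K : Type*) [Semiring K] (m : ℕ) :
    (subDiag K (m + 1)) ^ m = Matrix.single (Fin.last m) (0 : Fin (m + 1)) 1 := by
  rw [subDiag_pow]
  ext i j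
  simp only [Matrix.of_apply, Matrix.single, Fin.ext_iff, Fin.val_last, Fin.val_zero]
  exact if_congr (by have := i.isLt; have := j.isLt; omega) rfl rfl

lemma subDiag_pow_mul_E00 (K : Type*) [Semiring K] (m : ℕ) (i : Fin (m + 1)) :
    (subDiag K (m + 1)) ^ (i : ℕ) * Matrix.single (0 : Fin (m+1)) (0 : Fin (m+1)) 1
      = Matrix.single i (0 : Fin (m+1)) 1 := by
  rw [subDiag_pow]
  ext a c
  rw [Matrix.mul_apply, Finset.sum_eq_single (0 : Fin (m + 1))]
  · simp only [Matrix.of_apply, Matrix.single, Fin.ext_iff, Fin.val_zero, zero_add]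
    split_ifs <;> simp_all <;> omega
  · intro b _ hb
    have h2 : (Matrix.single (0 : Fin (m+1)) (0 : Fin (m+1)) (1:K)) b c = 0 := by
      simp only [Matrix.single, Matrix.of_apply]
      exact if_neg fun hh => hb hh.1.symm
    rw [h2, mul_zero]
  · simp

lemma Ei0_mul_supDiag_pow (K : Type*) [Semiring K] (m : ℕ) (i j : Fin (m + 1)) :
    Matrix.single i (0 : Fin (m+1)) 1 * (supDiag K (m + 1)) ^ (j : ℕ)
      = Matrix.single i j 1 := by
  rw [supDiag_pow]
  ext a c
  rw [Matrix.mul_apply, Finset.sum_eq_single (0 : Fin (m + 1))]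
  · simp only [Matrix.of_apply, Matrix.single, Fin.ext_iff, Fin.val_zero, zero_add]
    split_ifs <;> simp_all <;> omega
  · intro b _ hb
    have h1 : (Matrix.single i (0 : Fin (m+1)) (1:K)) a b = 0 := by
      simp only [Matrix.single, Matrix.of_apply]
      exact if_neg fun hh => hb hh.2.symm
    rw [h1, zero_mul]
  · simp

lemma key (K : Type*) [Semiring K] (m : ℕ) (i j : Fin (m + 1)) :
    (subDiag K (m+1)) ^ (i : ℕ) * (supDiag K (m+1)) ^ m * (subDiag K (m+1)) ^ m
        * (supDiag K (m+1)) ^ (j : ℕ) = Matrix.single i j 1 := by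
  rw [mul_assoc ((subDiag K (m+1)) ^ (i : ℕ)), supDiag_pow_max, subDiag_pow_max,
    Matrix.single_mul_single_same, one_mul, subDiag_pow_mul_E00, Ei0_mul_supDiag_pow]

/-- `SupDiag_n` and `SubDiag_n` generate `M_n(K)` as a `K`-algebra. -/
theorem stmt9 (K : Type*) [Field K] (n : ℕ) (hn : 0 < n) :
    Algebra.adjoin K {supDiag K n, subDiag K n} = ⊤ := by
  obtain ⟨m, rfl⟩ := Nat.exists_eq_succ_of_ne_zero hn.ne'
  rw [eq_top_iff]
  intro M _
  have hS : supDiag K (m+1) ∈ Algebra.adjoin K {supDiag K (m+1), subDiag K (m+1)} :=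
    Algebra.subset_adjoin (by simp)
  have hT : subDiag K (m+1) ∈ Algebra.adjoin K {supDiag K (m+1), subDiag K (m+1)} :=
    Algebra.subset_adjoin (by simp)
  have hE : ∀ i j : Fin (m+1),
      Matrix.single i j (1 : K) ∈ Algebra.adjoin K {supDiag K (m+1), subDiag K (m+1)} := by
    intro i j
    rw [← key]
    exact mul_mem (mul_mem (mul_mem (pow_mem hT _) (pow_mem hS _)) (pow_mem hT _)) (pow_mem hS _)
  rw [matrix_eq_sum_single M]
  refine sum_mem fun i _ => sum_mem fun j _ => ?_
  have : Matrix.single i j (M i j) = (M i j) • Matrix.single i j (1 : K) := by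
    rw [smul_single, smul_eq_mul, mul_one]
  rw [this]
  exact Subalgebra.smul_mem _ (hE i j) _
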